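/- For Algorithm-1 iterates with a saddle point (φ*, q*, μ*) of L, p* = Bφ*, b* = q*, step size 0 < ρ < (2rs² + s)/(1 + rs)², B injective with closed range, and G and F uniformly convex on bounded subsets of V and H respectively: the sequences (μⁿ), (νⁿ) and (ηⁿ) converge weakly in H to a common limit μ̂ such that (φ*, q*, μ̂) is a saddle point of L. If in addition I is uniformly convex on bounded subsets of H, then (μⁿ), (νⁿ) and (ηⁿ) converge strongly to μ*. -/

import Mathlib

open RealInnerProductSpace Filter Topology

/-- `u` is a subgradient of `J` at `x`. -/
def IsSubgradient {E : Type*} [NormedAddCommGroup E] [InnerProductSpace ℝ E]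
    (J : E → ℝ) (x u : E) : Prop :=
  ∀ z, J z ≥ J x + ⟪u, z - x⟫

/-- `J` is uniformly convex on the set `U`. -/
def UniformlyConvexOnSet {E : Type*} [NormedAddCommGroup E] [InnerProductSpace ℝ E]
    (J : E → ℝ) (U : Set E) : Prop :=
  ∃ Ψ : ℝ → ℝ, StrictMonoOn Ψ (Set.Ici 0) ∧ Ψ 0 = 0 ∧ (∀ t, 0 ≤ t → 0 ≤ Ψ t) ∧
    ∀ x ∈ U, ∀ y ∈ U, ∀ u v : E, IsSubgradient J x u → IsSubgradient J y v →
      ⟪u - v, x - y⟫ ≥ Ψ ‖x - y‖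

/-- `J` is uniformly convex on every bounded subset of its domain. -/
def UniformlyConvexOnBoundedSets {E : Type*} [NormedAddCommGroup E] [InnerProductSpace ℝ E]
    (J : E → ℝ) : Prop :=
  ∀ U : Set E, Bornology.IsBounded U → UniformlyConvexOnSet J U

lemma aux_bddBelow {V H : Type*} [NormedAddCommGroup V] [NormedSpace ℝ V] [CompleteSpace V]
    [NormedAddCommGroup H] [NormedSpace ℝ H] [CompleteSpace H]
    (B : V →L[ℝ] H) (hinj : Function.Injective B) (hcl : IsClosed (Set.range B)) :
    ∃ c : ℝ, 0 < c ∧ ∀ x : V, c * ‖x‖ ≤ ‖B x‖ := by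
  set K : Submodule ℝ H := LinearMap.range (B : V →ₗ[ℝ] H) with hK
  have hKcl : IsClosed (K : Set H) := by
    have : (K : Set H) = Set.range B := by
      ext y; simp [hK, LinearMap.mem_range]
    rwa [this]
  haveI : CompleteSpace K := hKcl.completeSpace_coe
  set B' : V →L[ℝ] K := B.codRestrict K (fun x => LinearMap.mem_range_self _ x) with hB'
  have hker : B'.ker = ⊥ := by
    rw [eq_bot_iff]
    intro x hx
    have hx0 : (B' x : H) = 0 := by
      have : B' x = 0 := hx
      rw [this]; rfl
    have : B x = B 0 := by
      simpa [hB', ContinuousLinearMap.coe_codRestrict_apply] using hx0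
    simpa using hinj this
  have hrange : B'.range = ⊤ := by
    rw [LinearMap.range_eq_top]
    rintro ⟨y, hy⟩
    obtain ⟨x, hx⟩ := hy
    exact ⟨x, by ext; simpa [hB', ContinuousLinearMap.coe_codRestrict_apply] using hx⟩
  set e := ContinuousLinearEquiv.ofBijective B' hker hrange with he
  refine ⟨(‖(e.symm : K →L[ℝ] V)‖ + 1)⁻¹, by positivity, fun x => ?_⟩
  have h2 : ‖x‖ ≤ ‖(e.symm : K →L[ℝ] V)‖ * ‖e x‖ := by
    conv_lhs => rw [← e.symm_apply_apply x]
    exact (e.symm : K →L[ℝ] V).le_opNorm (e x)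
  have h3 : ‖e x‖ = ‖B x‖ := rfl
  rw [h3] at h2
  rw [inv_mul_le_iff₀ (by positivity)]
  nlinarith [norm_nonneg (B x), norm_nonneg ((e.symm : K →L[ℝ] V))]

lemma aux_psi_tendsto (Ψ : ℝ → ℝ) (hmono : StrictMonoOn Ψ (Set.Ici 0)) (h0 : Ψ 0 = 0)
    (t a : ℕ → ℝ) (ht : ∀ᶠ n in atTop, 0 ≤ t n) (hta : ∀ᶠ n in atTop, Ψ (t n) ≤ a n)
    (ha : Tendsto a atTop (𝓝 0)) : Tendsto t atTop (𝓝 0) := by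
  rw [Metric.tendsto_atTop]
  intro ε hε
  have hΨε : 0 < Ψ ε := by
    rw [← h0]; exact hmono (by simp) (le_of_lt hε) hε
  have h1 : ∀ᶠ n in atTop, a n < Ψ ε := ha.eventually (eventually_lt_nhds hΨε)
  obtain ⟨N, hN⟩ := eventually_atTop.1 ((ht.and hta).and h1)
  refine ⟨N, fun n hn => ?_⟩
  obtain ⟨⟨h1', h2'⟩, h3'⟩ := hN n hn
  have htn : t n < ε := by
    by_contra hcon
    push_neg at hcon
    have := hmono.monotoneOn (by simp [le_of_lt hε] : ε ∈ Set.Ici (0:ℝ))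
      (by simpa using h1') hcon
    linarith
  rw [Real.dist_eq]
  rw [abs_of_nonneg (by linarith)]
  simpa using htn

/-- eventually bounded sequences are bounded -/
lemma aux_global_bound {E : Type*} [SeminormedAddCommGroup E] (x : ℕ → E) (N : ℕ) (R : ℝ)
    (h : ∀ n, N ≤ n → ‖x n‖ ≤ R) : ∃ R' : ℝ, 0 ≤ R' ∧ ∀ n, ‖x n‖ ≤ R' := by
  classical
  refine ⟨max R ((Finset.range (N+1)).sup' (by simp) (fun i => ‖x i‖)), ?_, fun n => ?_⟩
  · have := Finset.le_sup' (fun i => ‖x i‖) (by simp : 0 ∈ Finset.range (N+1))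
    exact le_trans (norm_nonneg (x 0)) (le_max_of_le_right this)
  · rcases le_or_gt N n with hn | hn
    · exact le_max_of_le_left (h n hn)
    · exact le_max_of_le_right (Finset.le_sup' (fun i => ‖x i‖)
        (Finset.mem_range.2 (by omega)))

lemma aux_ultra_lim (f : ℕ → ℝ) (R : ℝ) (hf : ∀ᶠ n in atTop, |f n| ≤ R)
    (U : Ultrafilter ℕ) (hU : (U : Filter ℕ) ≤ atTop) :
    ∃ L : ℝ, |L| ≤ R ∧ Tendsto f (U : Filter ℕ) (𝓝 L) := by
  have h2 : (U.map f : Filter ℝ) ≤ Filter.principal (Set.Icc (-R) R) := by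
    rw [Ultrafilter.coe_map]
    rw [Filter.le_principal_iff, Filter.mem_map]
    have : ∀ᶠ n in (U : Filter ℕ), f n ∈ Set.Icc (-R) R := by
      filter_upwards [hU hf] with n hn
      exact abs_le.1 hn
    exact this
  obtain ⟨L, hL, hL2⟩ := (isCompact_Icc (a := -R) (b := R)).ultrafilter_le_nhds (U.map f) h2
  refine ⟨L, abs_le.2 ⟨hL.1, hL.2⟩, ?_⟩
  rw [Ultrafilter.coe_map] at hL2
  exact hL2

lemma aux_weak_limit {E : Type*} [NormedAddCommGroup E] [InnerProductSpace ℝ E]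
    [CompleteSpace E] (x : ℕ → E) (R : ℝ) (hR : 0 ≤ R) (hx : ∀ᶠ n in atTop, ‖x n‖ ≤ R)
    (U : Ultrafilter ℕ) (hU : (U : Filter ℕ) ≤ atTop) :
    ∃ z : E, ‖z‖ ≤ R ∧ ∀ v : E, Tendsto (fun n => ⟪x n, v⟫) (U : Filter ℕ) (𝓝 ⟪z, v⟫) := by
  have key : ∀ v : E, ∃ L : ℝ, |L| ≤ R * ‖v‖ ∧
      Tendsto (fun n => ⟪x n, v⟫) (U : Filter ℕ) (𝓝 L) := by
    intro v
    apply aux_ultra_lim _ _ _ U hU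
    filter_upwards [hx] with n hn
    calc |⟪x n, v⟫| ≤ ‖x n‖ * ‖v‖ := abs_real_inner_le_norm _ _
      _ ≤ R * ‖v‖ := by
          have := norm_nonneg v
          nlinarith
  choose L hLb hLt using key
  haveI : (U : Filter ℕ).NeBot := U.neBot
  have hadd : ∀ v w, L (v + w) = L v + L w := by
    intro v w
    refine tendsto_nhds_unique (hLt (v+w)) ?_
    have : (fun n => ⟪x n, v + w⟫) = fun n => ⟪x n, v⟫ + ⟪x n, w⟫ := by
      funext n; exact inner_add_right _ _ _
    rw [this]
    exact (hLt v).add (hLt w)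
  have hsmul : ∀ (c : ℝ) v, L (c • v) = c * L v := by
    intro c v
    refine tendsto_nhds_unique (hLt (c • v)) ?_
    have : (fun n => ⟪x n, c • v⟫) = fun n => c * ⟪x n, v⟫ := by
      funext n; exact real_inner_smul_right _ _ _
    rw [this]
    exact (hLt v).const_mul c
  set ℓ : E →ₗ[ℝ] ℝ :=
    { toFun := L, map_add' := hadd, map_smul' := by intro c v; simpa using hsmul c v } with hℓ
  set ℓc := ℓ.mkContinuous R
    (fun v => by show ‖L v‖ ≤ R * ‖v‖; rw [Real.norm_eq_abs]; exact hLb v) with hℓc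
  refine ⟨(InnerProductSpace.toDual ℝ E).symm ℓc, ?_, fun v => ?_⟩
  · rw [LinearIsometryEquiv.norm_map]
    exact ℓ.mkContinuous_norm_le hR _
  · have : ⟪(InnerProductSpace.toDual ℝ E).symm ℓc, v⟫ = ℓc v :=
      InnerProductSpace.toDual_symm_apply
    rw [this]
    exact hLt v

/-- A point which is a weak limit (along an ultrafilter) of points of a nonempty closed
convex set belongs to that set. -/
lemma aux_mem_closed_convex {E : Type*} [NormedAddCommGroup E] [InnerProductSpace ℝ E]
    [CompleteSpace E] (C : Set E) (hCne : C.Nonempty) (hCcl : IsClosed C) (hCcv : Convex ℝ C)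
    (x : ℕ → E) (U : Ultrafilter ℕ) (hmem : ∀ᶠ n in (U : Filter ℕ), x n ∈ C)
    (z : E) (hw : ∀ v : E, Tendsto (fun n => ⟪x n, v⟫) (U : Filter ℕ) (𝓝 ⟪z, v⟫)) :
    z ∈ C := by
  haveI : (U : Filter ℕ).NeBot := U.neBot
  obtain ⟨y, hyC, hy⟩ := exists_norm_eq_iInf_of_complete_convex hCne
    (hCcl.isComplete) hCcv z
  have hchar := (norm_eq_iInf_iff_real_inner_le_zero hCcv hyC).1 hy
  have hzy : ⟪z - y, z - y⟫ ≤ 0 := by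
    have hlim : Tendsto (fun n => ⟪x n - y, z - y⟫) (U : Filter ℕ) (𝓝 ⟪z - y, z - y⟫) := by
      have e1 : (fun n => ⟪x n - y, z - y⟫) = fun n => ⟪x n, z - y⟫ - ⟪y, z - y⟫ := by
        funext n; rw [inner_sub_left]
      have e2 : ⟪z - y, z - y⟫ = ⟪z, z - y⟫ - ⟪y, z - y⟫ := by rw [inner_sub_left]
      rw [e1, e2]
      exact (hw (z - y)).sub tendsto_const_nhds
    have hev : ∀ᶠ n in (U : Filter ℕ), ⟪x n - y, z - y⟫ ≤ 0 := by
      filter_upwards [hmem] with n hn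
      have := hchar (x n) hn
      rwa [real_inner_comm] at this
    exact le_of_tendsto hlim hev
  have : ‖z - y‖ ^ 2 ≤ 0 := by
    rw [← real_inner_self_eq_norm_sq]; exact hzy
  have hz : z = y := by
    have : ‖z - y‖ = 0 := by nlinarith [norm_nonneg (z - y), sq_nonneg ‖z - y‖]
    rwa [norm_sub_eq_zero_iff] at this
  rw [hz]; exact hyC

/-- The fundamental energy identity for Algorithm 1. -/
lemma aux_T2 {E' : Type*} [NormedAddCommGroup E'] [InnerProductSpace ℝ E']
    (ρ s k : ℝ)
    (a a' Dn D1 e e1 P2 P3 C2 C3 : E')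
    (hP : P3 = P2 + (ρ*k) • Dn) (hC : C3 = C2 - (ρ*k) • e)
    (A Cc Dd : ℝ)
    (hA : A = ⟪-(a + k•Dn), Dn + P2⟫)
    (hCc : Cc = ⟪a + k•e, C2 - e⟫)
    (hDd : Dd = ⟪(P2 - C2) + (D1 + e1) - (2*s)•(a - a'), a⟫) :
    2*ρ*(⟪a, Dn + e⟫ - ⟪a', D1 + e1⟫) + 2*ρ*s*(‖a‖^2 - ‖a'‖^2) + 2*ρ*s*‖a-a'‖^2
      - 2*ρ*⟪a-a', D1+e1⟫ + (‖P3‖^2 + ‖C3‖^2 - ‖P2‖^2 - ‖C2‖^2)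
      + (2*ρ*k - ρ^2*k^2)*(‖Dn‖^2 + ‖e‖^2) + 2*ρ*(A + Cc + Dd) = 0 := by
  subst hP hC hA hCc hDd
  simp only [← real_inner_self_eq_norm_sq]
  simp only [inner_add_left, inner_add_right, inner_sub_left, inner_sub_right,
    inner_neg_left, inner_neg_right, real_inner_smul_left, real_inner_smul_right]
  simp only [real_inner_comm]
  ring

/-- Young-type inequality. -/
lemma aux_young {E' : Type*} [NormedAddCommGroup E'] [InnerProductSpace ℝ E']
    (ρ s θ c1 : ℝ) (hρ : 0 < ρ) (hs : 0 < s) (hθ : 0 < θ)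
    (hb : ρ ≤ c1*s*θ) (u w1 w2 : E') :
    2*ρ*⟪u, w1+w2⟫ ≤ 2*ρ*s*θ*‖u‖^2 + c1*(‖w1‖^2+‖w2‖^2) := by
  have h1 : ⟪u, w1+w2⟫ ≤ ‖u‖*‖w1+w2‖ := real_inner_le_norm _ _
  have h2 : ‖w1+w2‖^2 ≤ 2*‖w1‖^2+2*‖w2‖^2 := by
    rw [norm_add_sq_real]
    nlinarith [real_inner_le_norm w1 w2, sq_nonneg (‖w1‖ - ‖w2‖)]
  have key : (2*s*θ)*(2*ρ*⟪u, w1+w2⟫) ≤ (2*s*θ)*(2*ρ*s*θ*‖u‖^2 + c1*(‖w1‖^2+‖w2‖^2)) := by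
    nlinarith [sq_nonneg (2*s*θ*‖u‖ - ‖w1+w2‖), mul_pos hs hθ, norm_nonneg u,
      norm_nonneg (w1+w2), sq_nonneg (‖w1+w2‖), mul_pos (mul_pos hs hθ) hρ]
  exact le_of_mul_le_mul_left key (by positivity)

/-- The one-step energy inequality for Algorithm-1. -/
lemma aux_step {V H : Type*} [NormedAddCommGroup V] [InnerProductSpace ℝ V]
    [NormedAddCommGroup H] [InnerProductSpace ℝ H]
    (B : V →L[ℝ] H) (φs : V) (qs : H)
    (r s ρ θ c1 : ℝ) (hs : 0 < s) (hρ1 : 0 < ρ) (hθ0 : 0 < θ)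
    (hb : ρ ≤ c1*s*θ) (m : H)
    (μn μ1 pn pp bn bp qn νn ηn Δ1 E1 : H) (φn : V)
    (hνn : νn = s⁻¹ • (B φn - pn) + μn)
    (hηn : ηn = s⁻¹ • (bn - qn) + μn)
    (hvp : pp = pn + (ρ*(r+1/s)) • (B φn - pn))
    (hvb : bp = bn - (ρ*(r+1/s)) • (bn - qn)) :
    2*ρ*⟪μn - m, (B φn - pn) + (bn - qn)⟫ + 2*ρ*s*‖μn - m‖^2
      + ‖pp - B φs‖^2 + ‖bp - qs‖^2 + c1*(‖B φn - pn‖^2 + ‖bn - qn‖^2)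
      + 2*ρ*s*(1-θ)*‖μn - μ1‖^2
      + (2*ρ*(r+1/s) - ρ^2*(r+1/s)^2 - c1)*(‖B φn - pn‖^2 + ‖bn - qn‖^2)
      + 2*ρ*(⟪m - (νn + r•(B φn - pn)), B φn - B φs⟫
            + ⟪(ηn + r•(bn - qn)) - m, qn - qs⟫
            + ⟪((pn - bn) + (Δ1 + E1) - (2*s)•(μn - μ1)) - (B φs - qs), μn - m⟫)
      ≤ 2*ρ*⟪μ1 - m, Δ1 + E1⟫ + 2*ρ*s*‖μ1 - m‖^2
        + ‖pn - B φs‖^2 + ‖bn - qs‖^2 + c1*(‖Δ1‖^2 + ‖E1‖^2) := by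
  have hT := aux_T2 (ρ := ρ) (s := s) (k := r + 1/s)
    (a := μn - m) (a' := μ1 - m) (Dn := B φn - pn) (D1 := Δ1)
    (e := bn - qn) (e1 := E1) (P2 := pn - B φs) (P3 := pp - B φs)
    (C2 := bn - qs) (C3 := bp - qs)
    (hP := by rw [hvp]; abel) (hC := by rw [hvb]; abel)
    (A := ⟪m - (νn + r•(B φn - pn)), B φn - B φs⟫)
    (Cc := ⟪(ηn + r•(bn - qn)) - m, qn - qs⟫)
    (Dd := ⟪((pn - bn) + (Δ1 + E1) - (2*s)•(μn - μ1)) - (B φs - qs), μn - m⟫)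
    (hA := by
      congr 1
      · rw [hνn]; simp only [one_div]; module
      · abel)
    (hCc := by
      congr 1
      · rw [hηn]; simp only [one_div]; module
      · abel)
    (hDd := by
      congr 1
      abel)
  have hY := aux_young ρ s θ c1 hρ1 hs hθ0 hb (μn - μ1) Δ1 E1
  have hdm : (μn - m) - (μ1 - m) = μn - μ1 := by abel
  rw [hdm] at hT
  linarith [hT, hY]

lemma aux_constants (r s ρ : ℝ) (hr : 0 < r) (hs : 0 < s) (hρ1 : 0 < ρ)
    (hρ2 : ρ < (2*r*s^2 + s) / (1 + r*s)^2) :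
    ∃ θ c1 : ℝ, 0 < θ ∧ θ < 1 ∧ 0 < c1 ∧ ρ ≤ c1*s*θ ∧
      0 < 2*ρ*(r+1/s) - ρ^2*(r+1/s)^2 - c1 := by
  have hd : (0:ℝ) < (1 + r*s)^2 := by positivity
  have h1 : ρ*(1+r*s)^2 < 2*r*s^2 + s := (lt_div_iff₀ hd).1 hρ2
  set α2 := 2*ρ*(r+1/s) - ρ^2*(r+1/s)^2 with hα2def
  have hst : s*(1/s) = 1 := by field_simp
  have expand : (α2 - ρ*(1/s))*s^2 = ρ*(2*r*s^2+s) - ρ^2*(1+r*s)^2 := by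
    rw [hα2def]; field_simp; ring
  have hpos : 0 < ρ*(2*r*s^2+s) - ρ^2*(1+r*s)^2 := by nlinarith [h1, hρ1]
  have hα2 : ρ*(1/s) < α2 := by nlinarith [expand, hpos, mul_pos hs hs]
  set c1 := (ρ*(1/s) + α2)/2 with hc1def
  have hρs : 0 < ρ*(1/s) := by positivity
  have hc1pos : 0 < c1 := by rw [hc1def]; linarith
  have hρc1s : ρ < c1*s := by
    have h2 : ρ*(1/s) < c1 := by rw [hc1def]; linarith
    nlinarith [hst, hs, h2]
  have hcs : 0 < c1*s := by positivity
  set θ := (ρ/(c1*s) + 1)/2 with hθdef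
  have hx : 0 < ρ/(c1*s) := div_pos hρ1 hcs
  have hx1 : ρ/(c1*s) < 1 := (div_lt_one hcs).2 hρc1s
  have hθ0 : 0 < θ := by rw [hθdef]; linarith
  have hθ1 : θ < 1 := by rw [hθdef]; linarith
  have hbb : ρ ≤ c1*s*θ := by
    have h3 : ρ/(c1*s) ≤ θ := by rw [hθdef]; linarith
    have h4 : c1*s*(ρ/(c1*s)) = ρ := by field_simp
    nlinarith [mul_le_mul_of_nonneg_left h3 (le_of_lt hcs)]
  exact ⟨θ, c1, hθ0, hθ1, hc1pos, hbb, by rw [hc1def]; linarith⟩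

/-- inner products of a null sequence with a bounded sequence tend to zero -/
lemma aux_inner_zero {E' : Type*} [NormedAddCommGroup E'] [InnerProductSpace ℝ E']
    (x y : ℕ → E') (K : ℝ) (hx : Filter.Tendsto x Filter.atTop (nhds 0))
    (hy : ∀ᶠ n in Filter.atTop, ‖y n‖ ≤ K) :
    Filter.Tendsto (fun n => ⟪x n, y n⟫) Filter.atTop (nhds 0) := by
  have h1 : Filter.Tendsto (fun n => ‖x n‖*K) Filter.atTop (nhds 0) := by
    have := (tendsto_norm_zero.comp hx).mul_const K
    simpa using this
  apply squeeze_zero_norm' _ h1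
  filter_upwards [hy] with n hn
  calc ‖⟪x n, y n⟫‖ = |⟪x n, y n⟫| := rfl
    _ ≤ ‖x n‖*‖y n‖ := abs_real_inner_le_norm _ _
    _ ≤ ‖x n‖*K := by nlinarith [norm_nonneg (x n), norm_nonneg (y n)]

/-- machinery for an "almost decreasing" nonnegative energy -/
lemma aux_seq_machine (Y w : ℕ → ℝ) (hstep : ∀ n, 2 ≤ n → Y n + w n ≤ Y (n-1))
    (hY0 : ∀ n, 0 ≤ Y n) (hw : ∀ n, 2 ≤ n → 0 ≤ w n) :
    (∃ L, Tendsto Y atTop (𝓝 L)) ∧ Tendsto w atTop (𝓝 0) ∧ ∀ n, 2 ≤ n → Y n ≤ Y 2 := by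
  have hanti : Antitone (fun j => Y (j+2)) := by
    apply antitone_nat_of_succ_le
    intro j
    have := hstep (j+3) (by omega)
    have hww := hw (j+3) (by omega)
    have e1 : j + 3 - 1 = j + 2 := rfl
    rw [e1] at this
    simpa using by linarith
  have hbdd : BddBelow (Set.range (fun j => Y (j+2))) := by
    refine ⟨0, fun x hx => ?_⟩
    obtain ⟨j, rfl⟩ := hx
    exact hY0 _
  have hg := tendsto_atTop_ciInf hanti hbdd
  set L := ⨅ j, Y (j+2) with hL
  have hYlim : Tendsto Y atTop (𝓝 L) := (tendsto_add_atTop_iff_nat 2).1 hg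
  refine ⟨⟨L, hYlim⟩, ?_, ?_⟩
  · have hdiff : Tendsto (fun j => Y (j+2) - Y (j+3)) atTop (𝓝 0) := by
      have h2 : Tendsto (fun j => Y (j+3)) atTop (𝓝 L) := (tendsto_add_atTop_iff_nat 3).2 hYlim
      have h1 : Tendsto (fun j => Y (j+2)) atTop (𝓝 L) := (tendsto_add_atTop_iff_nat 2).2 hYlim
      simpa using h1.sub h2
    have hsq : Tendsto (fun j => w (j+3)) atTop (𝓝 0) := by
      refine squeeze_zero (fun j => hw (j+3) (by omega)) (fun j => ?_) hdiff
      have := hstep (j+3) (by omega)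
      have e1 : j + 3 - 1 = j + 2 := rfl
      rw [e1] at this
      linarith
    exact (tendsto_add_atTop_iff_nat 3).1 hsq
  · intro n hn
    induction n, hn using Nat.le_induction with
    | base => exact le_refl _
    | succ n hn ih =>
      have := hstep (n+1) (by omega)
      have hww := hw (n+1) (by omega)
      have e1 : n + 1 - 1 = n := rfl
      rw [e1] at this
      linarith

lemma aux_normsq_zero {E' : Type*} [NormedAddCommGroup E'] (x : ℕ → E') (a : E')
    (hx : Tendsto x atTop (𝓝 a)) : Tendsto (fun n => ‖x n - a‖^2) atTop (𝓝 0) := by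
  have h1 : Tendsto (fun n => ‖x n - a‖) atTop (𝓝 0) := by
    rw [← tendsto_sub_nhds_zero_iff] at hx
    exact tendsto_norm_zero.comp hx
  have := h1.mul h1
  simpa [pow_two] using this

lemma aux_sq_tendsto (t : ℕ → ℝ) (h : Tendsto (fun n => t n ^ 2) atTop (𝓝 0))
    (ht : ∀ n, 0 ≤ t n) : Tendsto t atTop (𝓝 0) := by
  have := h.sqrt
  simp only [Real.sqrt_zero] at this
  apply this.congr
  intro n
  exact Real.sqrt_sq (ht n)

lemma aux_extract (w g : ℕ → ℝ) (C : ℝ) (hC : 0 < C)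
    (hg0 : ∀ᶠ n in atTop, 0 ≤ g n) (hle : ∀ᶠ n in atTop, C * g n ≤ w n)
    (hw : Tendsto w atTop (𝓝 0)) : Tendsto g atTop (𝓝 0) := by
  have h1 : Tendsto (fun n => w n / C) atTop (𝓝 0) := by
    simpa using hw.div_const C
  apply squeeze_zero' hg0 _ h1
  filter_upwards [hle] with n hn
  rw [le_div_iff₀ hC]
  linarith

set_option maxHeartbeats 3000000 in
theorem algorithm1_multiplier_convergence
    {V H : Type*} [NormedAddCommGroup V] [InnerProductSpace ℝ V] [CompleteSpace V]
    [NormedAddCommGroup H] [InnerProductSpace ℝ H] [CompleteSpace H]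
    (B : V →L[ℝ] H) (F : H → ℝ) (G : V → ℝ) (I : H → ℝ)
    (hFconv : ConvexOn ℝ Set.univ F) (hFlsc : LowerSemicontinuous F)
    (hGconv : ConvexOn ℝ Set.univ G) (hGlsc : LowerSemicontinuous G)
    (hIconv : ConvexOn ℝ Set.univ I) (hIlsc : LowerSemicontinuous I)
    (L : V → H → H → ℝ)
    (hL : ∀ (φ' : V) (q' μ' : H), L φ' q' μ' = F q' + G φ' - I μ' + ⟪μ', B φ' - q'⟫)
    (r s ρ : ℝ) (hr : 0 < r) (hs : 0 < s)
    (hρ1 : 0 < ρ) (hρ2 : ρ < (2*r*s^2 + s) / (1 + r*s)^2)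
    (φs : V) (qs μs : H) (ps bs : H) (hps : ps = B φs) (hbs : bs = qs)
    (hsaddle : ∀ (φ' : V) (q' μ' : H), L φs qs μ' ≤ L φs qs μs ∧ L φs qs μs ≤ L φ' q' μs)
    (φ : ℕ → V) (q μ p b ν η : ℕ → H)
    (hi : ∀ n, 1 ≤ n → ∀ μ' : H,
      I μ' - I (μ n) + ⟪μ n - μ', p n - b n⟫ - s * ⟪μ n - μ', μ n - ν (n-1)⟫
        - s * ⟪μ n - μ', μ n - η (n-1)⟫ ≥ 0)
    (hii : ∀ n, 1 ≤ n →
      ν n = s⁻¹ • (B (φ n) - p n) + μ n ∧ η n = s⁻¹ • (b n - q n) + μ n)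
    (hiii : ∀ n, 1 ≤ n → ∀ φ' : V,
      G φ' - G (φ n) + ⟪ν n + r • (B (φ n) - p n), B φ' - B (φ n)⟫ ≥ 0)
    (hiv : ∀ n, 1 ≤ n → ∀ q' : H,
      F q' - F (q n) + ⟪η n + r • (b n - q n), q n - q'⟫ ≥ 0)
    (hv : ∀ n, 1 ≤ n →
      p (n+1) = p n + (ρ * (r + 1/s)) • (B (φ n) - p n) ∧
      b (n+1) = b n - (ρ * (r + 1/s)) • (b n - q n))
    (hBinj : Function.Injective B) (hBrange : IsClosed (Set.range B))
    (hGuc : UniformlyConvexOnBoundedSets G) (hFuc : UniformlyConvexOnBoundedSets F) :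
    (∃ μhat : H,
      (∀ v : H, Tendsto (fun n => ⟪μ n, v⟫) atTop (nhds ⟪μhat, v⟫)) ∧
      (∀ v : H, Tendsto (fun n => ⟪ν n, v⟫) atTop (nhds ⟪μhat, v⟫)) ∧
      (∀ v : H, Tendsto (fun n => ⟪η n, v⟫) atTop (nhds ⟪μhat, v⟫)) ∧
      (∀ (φ' : V) (q' μ' : H), L φs qs μ' ≤ L φs qs μhat ∧ L φs qs μhat ≤ L φ' q' μhat)) ∧
    (UniformlyConvexOnBoundedSets I →
      Tendsto μ atTop (nhds μs) ∧ Tendsto ν atTop (nhds μs) ∧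
      Tendsto η atTop (nhds μs)) := by
  classical
  obtain ⟨θ, c1, hθ0, hθ1, hc1pos, hbb, hβ⟩ := aux_constants r s ρ hr hs hρ1 hρ2
  obtain ⟨cB, hcB0, hcBle⟩ := aux_bddBelow B hBinj hBrange
  set Yf : H → ℕ → ℝ := fun m n =>
    2*ρ*⟪μ n - m, (B (φ n) - p n) + (b n - q n)⟫ + 2*ρ*s*‖μ n - m‖^2
      + ‖p (n+1) - B φs‖^2 + ‖b (n+1) - qs‖^2
      + c1*(‖B (φ n) - p n‖^2 + ‖b n - q n‖^2) with hYf
  set AAf : H → ℕ → ℝ := fun m n =>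
    ⟪m - (ν n + r • (B (φ n) - p n)), B (φ n) - B φs⟫ with hAAf
  set CCf : H → ℕ → ℝ := fun m n => ⟪(η n + r • (b n - q n)) - m, q n - qs⟫ with hCCf
  set ccf : ℕ → H := fun n =>
    (p n - b n) + ((B (φ (n-1)) - p (n-1)) + (b (n-1) - q (n-1)))
      - (2*s) • (μ n - μ (n-1)) with hccf
  set DDf : H → ℕ → ℝ := fun m n => ⟪ccf n - (B φs - qs), μ n - m⟫ with hDDf
  have hkey : ∀ (m : H) (n : ℕ), 2 ≤ n →
      Yf m n + 2*ρ*s*(1-θ)*‖μ n - μ (n-1)‖^2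
        + (2*ρ*(r+1/s) - ρ^2*(r+1/s)^2 - c1)*(‖B (φ n) - p n‖^2 + ‖b n - q n‖^2)
        + 2*ρ*(AAf m n + CCf m n + DDf m n) ≤ Yf m (n-1) := by
    intro m n hn
    obtain ⟨j, rfl⟩ : ∃ j, n = j + 2 := ⟨n - 2, by omega⟩
    have e1 : j + 2 - 1 = j + 1 := rfl
    rw [e1]
    simp only [hYf, hAAf, hCCf, hDDf, hccf, e1]
    exact aux_step B φs qs r s ρ θ c1 hs hρ1 hθ0 hbb m
      (μ (j+2)) (μ (j+1)) (p (j+2)) (p (j+3)) (b (j+2)) (b (j+3)) (q (j+2)) (ν (j+2))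
      (η (j+2)) (B (φ (j+1)) - p (j+1)) (b (j+1) - q (j+1)) (φ (j+2))
      (hii (j+2) (by omega)).1 (hii (j+2) (by omega)).2
      (hv (j+2) (by omega)).1 (hv (j+2) (by omega)).2
    -- saddle-point subgradient inequalities at μs
  have hGs : ∀ φ', G φ' - G φs + ⟪μs, B φ' - B φs⟫ ≥ 0 := by
    intro φ'
    have h := (hsaddle φ' qs μs).2
    simp only [hL] at h
    have e : ⟪μs, B φ' - qs⟫ - ⟪μs, B φs - qs⟫ = ⟪μs, B φ' - B φs⟫ := by
      rw [← inner_sub_right]; congr 1; abel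
    linarith
  have hFs : ∀ q', F q' - F qs - ⟪μs, q' - qs⟫ ≥ 0 := by
    intro q'
    have h := (hsaddle φs q' μs).2
    simp only [hL] at h
    have e : ⟪μs, B φs - q'⟫ - ⟪μs, B φs - qs⟫ = -⟪μs, q' - qs⟫ := by
      rw [← inner_sub_right, ← inner_neg_right]; congr 1; abel
    linarith
  have hIs : ∀ μ', I μ' - I μs - ⟪B φs - qs, μ' - μs⟫ ≥ 0 := by
    intro μ'
    have h := (hsaddle φs qs μ').1
    simp only [hL] at h
    have e : ⟪μ', B φs - qs⟫ - ⟪μs, B φs - qs⟫ = ⟪B φs - qs, μ' - μs⟫ := by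
      rw [← inner_sub_left, real_inner_comm]
    linarith
  -- subgradient interpretations
  have hsubG : ∀ n, 1 ≤ n → IsSubgradient G (φ n)
      (-(ContinuousLinearMap.adjoint B (ν n + r • (B (φ n) - p n)))) := by
    intro n hn z
    have h := hiii n hn z
    have e : ⟪-(ContinuousLinearMap.adjoint B (ν n + r • (B (φ n) - p n))), z - φ n⟫
        = -⟪ν n + r • (B (φ n) - p n), B z - B (φ n)⟫ := by
      rw [inner_neg_left, ContinuousLinearMap.adjoint_inner_left, map_sub]
    rw [e]
    linarith
  have hsubGs : IsSubgradient G φs (-(ContinuousLinearMap.adjoint B μs)) := by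
    intro z
    have h := hGs z
    have e : ⟪-(ContinuousLinearMap.adjoint B μs), z - φs⟫ = -⟪μs, B z - B φs⟫ := by
      rw [inner_neg_left, ContinuousLinearMap.adjoint_inner_left, map_sub]
    rw [e]
    linarith
  have hsubF : ∀ n, 1 ≤ n → IsSubgradient F (q n) (η n + r • (b n - q n)) := by
    intro n hn z
    have h := hiv n hn z
    have e : ⟪η n + r • (b n - q n), q n - z⟫ = -⟪η n + r • (b n - q n), z - q n⟫ := by
      rw [← inner_neg_right]; congr 1; abel
    rw [e] at h
    linarith
  have hsubFs : IsSubgradient F qs μs := by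
    intro z; have h := hFs z; linarith
  have hsubIs : IsSubgradient I μs (B φs - qs) := by
    intro z; have h := hIs z; linarith
  have hsubI : ∀ n, 2 ≤ n → IsSubgradient I (μ n) (ccf n) := by
    intro n hn
    obtain ⟨j, rfl⟩ : ∃ j, n = j + 2 := ⟨n - 2, by omega⟩
    intro z
    have h := hi (j+2) (by omega) z
    have e1 : j + 2 - 1 = j + 1 := rfl
    rw [e1] at h
    rw [(hii (j+1) (by omega)).1, (hii (j+1) (by omega)).2] at h
    have hveq : ccf (j+2) = (p (j+2) - b (j+2))
        - s • (μ (j+2) - (s⁻¹ • (B (φ (j+1)) - p (j+1)) + μ (j+1)))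
        - s • (μ (j+2) - (s⁻¹ • (b (j+1) - q (j+1)) + μ (j+1))) := by
      simp only [hccf, e1]
      match_scalars <;> (field_simp; try ring)
    have e : ⟪ccf (j+2), z - μ (j+2)⟫
        = -(⟪μ (j+2) - z, p (j+2) - b (j+2)⟫
            - s * ⟪μ (j+2) - z, μ (j+2) - (s⁻¹ • (B (φ (j+1)) - p (j+1)) + μ (j+1))⟫
            - s * ⟪μ (j+2) - z, μ (j+2) - (s⁻¹ • (b (j+1) - q (j+1)) + μ (j+1))⟫) := by
      rw [hveq]
      simp only [inner_sub_left, inner_sub_right, inner_add_left, inner_add_right,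
        inner_neg_left, inner_neg_right, real_inner_smul_left, real_inner_smul_right]
      simp only [real_inner_comm]
      ring
    rw [e]
    linarith
  -- nonnegativity of cross terms
  have hAApos : ∀ (m : H), (∀ φ', G φ' - G φs + ⟪m, B φ' - B φs⟫ ≥ 0) →
      ∀ n, 1 ≤ n → 0 ≤ AAf m n := by
    intro m hm n hn
    have h1 := hiii n hn φs
    have h2 := hm (φ n)
    have e : ⟪ν n + r • (B (φ n) - p n), B φs - B (φ n)⟫
        = -⟪ν n + r • (B (φ n) - p n), B (φ n) - B φs⟫ := by
      rw [← inner_neg_right]; congr 1; abel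
    have e2 : AAf m n = ⟪m, B (φ n) - B φs⟫
        - ⟪ν n + r • (B (φ n) - p n), B (φ n) - B φs⟫ := by
      simp only [hAAf]; rw [inner_sub_left]
    linarith
  have hCCpos : ∀ (m : H), (∀ q', F q' - F qs - ⟪m, q' - qs⟫ ≥ 0) →
      ∀ n, 1 ≤ n → 0 ≤ CCf m n := by
    intro m hm n hn
    have h1 := hiv n hn qs
    have h2 := hm (q n)
    have e2 : CCf m n = ⟪η n + r • (b n - q n), q n - qs⟫ - ⟪m, q n - qs⟫ := by
      simp only [hCCf]; rw [inner_sub_left]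
    linarith
  have hDDpos : ∀ (m : H), (∀ μ', I μ' - I m - ⟪B φs - qs, μ' - m⟫ ≥ 0) →
      ∀ n, 2 ≤ n → 0 ≤ DDf m n := by
    intro m hm n hn
    have h1 := hsubI n hn m
    have h2 := hm (μ n)
    have e : ⟪ccf n, m - μ n⟫ = -⟪ccf n, μ n - m⟫ := by
      rw [← inner_neg_right]; congr 1; abel
    have e2 : DDf m n = ⟪ccf n, μ n - m⟫ - ⟪B φs - qs, μ n - m⟫ := by
      simp only [hDDf]; rw [inner_sub_left]
    linarith [h1, h2, e, e2]
  -- lower bound for the energy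
  have hYlb : ∀ (m : H) (n : ℕ),
      2*ρ*s*(1-θ)*‖μ n - m‖^2 + ‖p (n+1) - B φs‖^2 + ‖b (n+1) - qs‖^2 ≤ Yf m n := by
    intro m n
    have h := aux_young ρ s θ c1 hρ1 hs hθ0 hbb (-(μ n - m)) (B (φ n) - p n) (b n - q n)
    simp only [inner_neg_left, norm_neg] at h
    simp only [hYf]
    linarith
  have hY0 : ∀ m n, 0 ≤ Yf m n := by
    intro m n
    have h1 : (0:ℝ) ≤ 2*ρ*s*(1-θ) := by
      have h2 : (0:ℝ) < 1-θ := by linarith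
      have := mul_pos (mul_pos (mul_pos (show (0:ℝ) < 2 by norm_num) hρ1) hs) h2
      linarith
    nlinarith [hYlb m n, sq_nonneg ‖μ n - m‖, sq_nonneg ‖p (n+1) - B φs‖,
      sq_nonneg ‖b (n+1) - qs‖, mul_nonneg h1 (sq_nonneg ‖μ n - m‖)]
    -- coefficient positivity
  have hcoef : (0:ℝ) < 2*ρ*s*(1-θ) := by
    have h2 : (0:ℝ) < 1-θ := by linarith
    exact mul_pos (mul_pos (mul_pos (by norm_num) hρ1) hs) h2
  have h2ρ : (0:ℝ) < 2*ρ := by linarith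
  -- the energy machine at μs
  set w0 : ℕ → ℝ := fun n => 2*ρ*s*(1-θ)*‖μ n - μ (n-1)‖^2
      + (2*ρ*(r+1/s) - ρ^2*(r+1/s)^2 - c1)*(‖B (φ n) - p n‖^2 + ‖b n - q n‖^2)
      + 2*ρ*(AAf μs n + CCf μs n + DDf μs n) with hw0def
  have hparts : ∀ n, 2 ≤ n → 0 ≤ 2*ρ*s*(1-θ)*‖μ n - μ (n-1)‖^2
      ∧ 0 ≤ (2*ρ*(r+1/s) - ρ^2*(r+1/s)^2 - c1)*(‖B (φ n) - p n‖^2 + ‖b n - q n‖^2)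
      ∧ 0 ≤ AAf μs n ∧ 0 ≤ CCf μs n ∧ 0 ≤ DDf μs n := by
    intro n hn
    exact ⟨mul_nonneg hcoef.le (sq_nonneg _), mul_nonneg hβ.le (by positivity),
      hAApos μs hGs n (by omega), hCCpos μs hFs n (by omega), hDDpos μs hIs n hn⟩
  have hw0pos : ∀ n, 2 ≤ n → 0 ≤ w0 n := by
    intro n hn
    obtain ⟨g1, g2, g3, g4, g5⟩ := hparts n hn
    simp only [hw0def]
    linarith [mul_nonneg h2ρ.le g3, mul_nonneg h2ρ.le g4, mul_nonneg h2ρ.le g5]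
  obtain ⟨⟨L0, hL0⟩, hw0lim, hYle⟩ := aux_seq_machine (Yf μs) w0
    (fun n hn => by have := hkey μs n hn; simp only [hw0def]; linarith)
    (hY0 μs) hw0pos
  -- components of w0 tend to zero
  have hAA0 : Tendsto (fun n => AAf μs n) atTop (𝓝 0) := by
    refine aux_extract w0 _ (2*ρ) h2ρ ?_ ?_ hw0lim
    · filter_upwards [eventually_ge_atTop 2] with n hn
      exact (hparts n hn).2.2.1
    · filter_upwards [eventually_ge_atTop 2] with n hn
      obtain ⟨g1, g2, g3, g4, g5⟩ := hparts n hn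
      simp only [hw0def]
      linarith [mul_nonneg h2ρ.le g3, mul_nonneg h2ρ.le g4, mul_nonneg h2ρ.le g5]
  have hCC0 : Tendsto (fun n => CCf μs n) atTop (𝓝 0) := by
    refine aux_extract w0 _ (2*ρ) h2ρ ?_ ?_ hw0lim
    · filter_upwards [eventually_ge_atTop 2] with n hn
      exact (hparts n hn).2.2.2.1
    · filter_upwards [eventually_ge_atTop 2] with n hn
      obtain ⟨g1, g2, g3, g4, g5⟩ := hparts n hn
      simp only [hw0def]
      linarith [mul_nonneg h2ρ.le g3, mul_nonneg h2ρ.le g4, mul_nonneg h2ρ.le g5]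
  have hDD0 : Tendsto (fun n => DDf μs n) atTop (𝓝 0) := by
    refine aux_extract w0 _ (2*ρ) h2ρ ?_ ?_ hw0lim
    · filter_upwards [eventually_ge_atTop 2] with n hn
      exact (hparts n hn).2.2.2.2
    · filter_upwards [eventually_ge_atTop 2] with n hn
      obtain ⟨g1, g2, g3, g4, g5⟩ := hparts n hn
      simp only [hw0def]
      linarith [mul_nonneg h2ρ.le g3, mul_nonneg h2ρ.le g4, mul_nonneg h2ρ.le g5]
  have hΔE2 : Tendsto (fun n => ‖B (φ n) - p n‖^2 + ‖b n - q n‖^2) atTop (𝓝 0) := by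
    refine aux_extract w0 _ _ hβ ?_ ?_ hw0lim
    · filter_upwards with n; positivity
    · filter_upwards [eventually_ge_atTop 2] with n hn
      obtain ⟨g1, g2, g3, g4, g5⟩ := hparts n hn
      simp only [hw0def]
      linarith [mul_nonneg h2ρ.le g3, mul_nonneg h2ρ.le g4, mul_nonneg h2ρ.le g5]
  have hδ2 : Tendsto (fun n => ‖μ n - μ (n-1)‖^2) atTop (𝓝 0) := by
    refine aux_extract w0 _ _ hcoef ?_ ?_ hw0lim
    · filter_upwards with n; exact sq_nonneg _
    · filter_upwards [eventually_ge_atTop 2] with n hn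
      obtain ⟨g1, g2, g3, g4, g5⟩ := hparts n hn
      simp only [hw0def]
      linarith [mul_nonneg h2ρ.le g3, mul_nonneg h2ρ.le g4, mul_nonneg h2ρ.le g5]
  have hΔ2 : Tendsto (fun n => ‖B (φ n) - p n‖^2) atTop (𝓝 0) :=
    squeeze_zero (fun n => sq_nonneg _) (fun n => by nlinarith [sq_nonneg ‖b n - q n‖]) hΔE2
  have hE2 : Tendsto (fun n => ‖b n - q n‖^2) atTop (𝓝 0) :=
    squeeze_zero (fun n => sq_nonneg _) (fun n => by nlinarith [sq_nonneg ‖B (φ n) - p n‖]) hΔE2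
  have hΔv : Tendsto (fun n => B (φ n) - p n) atTop (𝓝 0) :=
    tendsto_zero_iff_norm_tendsto_zero.2 (aux_sq_tendsto _ hΔ2 (fun n => norm_nonneg _))
  have hEv : Tendsto (fun n => b n - q n) atTop (𝓝 0) :=
    tendsto_zero_iff_norm_tendsto_zero.2 (aux_sq_tendsto _ hE2 (fun n => norm_nonneg _))
  have hδv : Tendsto (fun n => μ n - μ (n-1)) atTop (𝓝 0) :=
    tendsto_zero_iff_norm_tendsto_zero.2 (aux_sq_tendsto _ hδ2 (fun n => norm_nonneg _))
  -- boundedness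
  have hμsb : ∀ n, 2 ≤ n → ‖μ n - μs‖ ≤ Yf μs 2/(2*ρ*s*(1-θ)) + 1 := by
    intro n hn
    have h1 := hYlb μs n
    have h2 := hYle n hn
    have h3 : ‖μ n - μs‖^2 ≤ Yf μs 2/(2*ρ*s*(1-θ)) := by
      rw [le_div_iff₀ hcoef]
      nlinarith [sq_nonneg ‖p (n+1) - B φs‖, sq_nonneg ‖b (n+1) - qs‖]
    have h4 : 0 ≤ Yf μs 2/(2*ρ*s*(1-θ)) := div_nonneg (hY0 μs 2) hcoef.le
    nlinarith [norm_nonneg (μ n - μs), sq_nonneg (‖μ n - μs‖ - 1)]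
  set Rμ : ℝ := Yf μs 2/(2*ρ*s*(1-θ)) + 1 with hRμdef
  have hRμ0 : 0 ≤ Rμ := by
    rw [hRμdef]
    have := div_nonneg (hY0 μs 2) hcoef.le
    linarith
  have hpsb : ∀ n, 3 ≤ n → ‖p n - B φs‖ ≤ Yf μs 2 + 1 := by
    intro n hn
    obtain ⟨j, rfl⟩ : ∃ j, n = j + 3 := ⟨n - 3, by omega⟩
    have h1 := hYlb μs (j+2)
    have h2 := hYle (j+2) (by omega)
    have hnn : 0 ≤ 2*ρ*s*(1-θ)*‖μ (j+2) - μs‖^2 := mul_nonneg hcoef.le (sq_nonneg _)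
    have h3 : ‖p (j+2+1) - B φs‖^2 ≤ Yf μs 2 := by nlinarith [sq_nonneg ‖b (j+2+1) - qs‖]
    nlinarith [norm_nonneg (p (j+2+1) - B φs), sq_nonneg (‖p (j+2+1) - B φs‖ - 1), hY0 μs 2]
  have hbsb : ∀ n, 3 ≤ n → ‖b n - qs‖ ≤ Yf μs 2 + 1 := by
    intro n hn
    obtain ⟨j, rfl⟩ : ∃ j, n = j + 3 := ⟨n - 3, by omega⟩
    have h1 := hYlb μs (j+2)
    have h2 := hYle (j+2) (by omega)
    have hnn : 0 ≤ 2*ρ*s*(1-θ)*‖μ (j+2) - μs‖^2 := mul_nonneg hcoef.le (sq_nonneg _)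
    have h3 : ‖b (j+2+1) - qs‖^2 ≤ Yf μs 2 := by nlinarith [sq_nonneg ‖p (j+2+1) - B φs‖]
    nlinarith [norm_nonneg (b (j+2+1) - qs), sq_nonneg (‖b (j+2+1) - qs‖ - 1), hY0 μs 2]
  have hΔnorm : Tendsto (fun n => ‖B (φ n) - p n‖) atTop (𝓝 0) :=
    aux_sq_tendsto _ hΔ2 (fun n => norm_nonneg _)
  have hEnorm : Tendsto (fun n => ‖b n - q n‖) atTop (𝓝 0) :=
    aux_sq_tendsto _ hE2 (fun n => norm_nonneg _)
  have hΔev : ∀ᶠ n in atTop, ‖B (φ n) - p n‖ ≤ 1 := hΔnorm.eventually (eventually_le_nhds one_pos)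
  have hEev : ∀ᶠ n in atTop, ‖b n - q n‖ ≤ 1 := hEnorm.eventually (eventually_le_nhds one_pos)
  -- strong convergence of φ via uniform convexity of G
  obtain ⟨N₁, hN₁⟩ := eventually_atTop.1 (hΔev.and (eventually_ge_atTop 3))
  set RG : ℝ := (1 + (Yf μs 2 + 1))/cB with hRGdef
  have hRG0 : 0 ≤ RG := by
    rw [hRGdef]
    exact div_nonneg (by nlinarith [hY0 μs 2]) hcB0.le
  have hφb : ∀ n, N₁ ≤ n → ‖φ n - φs‖ ≤ RG := by
    intro n hn
    obtain ⟨hΔ1, hn3⟩ := hN₁ n hn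
    have h1 : cB*‖φ n - φs‖ ≤ ‖B (φ n - φs)‖ := hcBle _
    have h2 : B (φ n - φs) = (B (φ n) - p n) + (p n - B φs) := by rw [map_sub]; abel
    have h3 : ‖B (φ n - φs)‖ ≤ 1 + (Yf μs 2 + 1) := by
      rw [h2]
      refine le_trans (norm_add_le _ _) ?_
      have := hpsb n hn3
      linarith
    rw [hRGdef, le_div_iff₀ hcB0]
    nlinarith
  obtain ⟨ΨG, hΨGmono, hΨG0, hΨGnn, hΨGkey⟩ :=
    hGuc (Metric.closedBall φs RG) Metric.isBounded_closedBall
  have hφmem : ∀ n, N₁ ≤ n → φ n ∈ Metric.closedBall φs RG := by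
    intro n hn
    rw [Metric.mem_closedBall, dist_eq_norm]
    exact hφb n hn
  have hφsmem : φs ∈ Metric.closedBall φs RG := Metric.mem_closedBall_self hRG0
  have hAAG : ∀ n, max 1 N₁ ≤ n → ΨG ‖φ n - φs‖ ≤ AAf μs n := by
    intro n hn
    have h := hΨGkey (φ n) (hφmem n (le_trans (le_max_right _ _) hn)) φs hφsmem _ _
      (hsubG n (le_trans (le_max_left _ _) hn)) hsubGs
    have e : ⟪-(ContinuousLinearMap.adjoint B (ν n + r • (B (φ n) - p n)))
        - -(ContinuousLinearMap.adjoint B μs), φ n - φs⟫ = AAf μs n := by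
      rw [show -(ContinuousLinearMap.adjoint B (ν n + r • (B (φ n) - p n)))
          - -(ContinuousLinearMap.adjoint B μs)
          = ContinuousLinearMap.adjoint B (μs - (ν n + r • (B (φ n) - p n))) from by
        rw [map_sub]; abel]
      rw [ContinuousLinearMap.adjoint_inner_left, map_sub]
    rw [e] at h
    linarith
  have hφ0 : Tendsto (fun n => ‖φ n - φs‖) atTop (𝓝 0) := by
    refine aux_psi_tendsto ΨG hΨGmono hΨG0 _ (fun n => AAf μs n) ?_ ?_ hAA0
    · filter_upwards with n; exact norm_nonneg _
    · filter_upwards [eventually_ge_atTop (max 1 N₁)] with n hn; exact hAAG n hn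
  have hφlim : Tendsto φ atTop (𝓝 φs) := by
    rw [← tendsto_sub_nhds_zero_iff]
    exact tendsto_zero_iff_norm_tendsto_zero.2 hφ0
  have hBφlim : Tendsto (fun n => B (φ n)) atTop (𝓝 (B φs)) := (B.continuous.tendsto φs).comp hφlim
  have hplim : Tendsto p atTop (𝓝 (B φs)) := by
    have h2 := hBφlim.sub hΔv
    have e : ∀ n, B (φ n) - (B (φ n) - p n) = p n := fun n => by abel
    have h3 := h2.congr e
    simpa using h3
  -- strong convergence of q via uniform convexity of F
  obtain ⟨N₂, hN₂⟩ := eventually_atTop.1 (hEev.and (eventually_ge_atTop 3))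
  set RF : ℝ := (Yf μs 2 + 1) + 1 with hRFdef
  have hqb : ∀ n, N₂ ≤ n → ‖q n - qs‖ ≤ RF := by
    intro n hn
    obtain ⟨hE1, hn3⟩ := hN₂ n hn
    have h2 : q n - qs = (b n - qs) - (b n - q n) := by abel
    rw [h2, hRFdef]
    refine le_trans (norm_sub_le _ _) ?_
    have := hbsb n hn3
    linarith
  have hRF0 : 0 ≤ RF := by
    rw [hRFdef]
    nlinarith [hY0 μs 2]
  obtain ⟨ΨF, hΨFmono, hΨF0, hΨFnn, hΨFkey⟩ :=
    hFuc (Metric.closedBall qs RF) Metric.isBounded_closedBall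
  have hqmem : ∀ n, N₂ ≤ n → q n ∈ Metric.closedBall qs RF := by
    intro n hn
    rw [Metric.mem_closedBall, dist_eq_norm]
    exact hqb n hn
  have hqsmem : qs ∈ Metric.closedBall qs RF := Metric.mem_closedBall_self hRF0
  have hCCF : ∀ n, max 1 N₂ ≤ n → ΨF ‖q n - qs‖ ≤ CCf μs n := by
    intro n hn
    have h := hΨFkey (q n) (hqmem n (le_trans (le_max_right _ _) hn)) qs hqsmem _ _
      (hsubF n (le_trans (le_max_left _ _) hn)) hsubFs
    simp only [hCCf]
    linarith
  have hq0 : Tendsto (fun n => ‖q n - qs‖) atTop (𝓝 0) := by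
    refine aux_psi_tendsto ΨF hΨFmono hΨF0 _ (fun n => CCf μs n) ?_ ?_ hCC0
    · filter_upwards with n; exact norm_nonneg _
    · filter_upwards [eventually_ge_atTop (max 1 N₂)] with n hn; exact hCCF n hn
  have hqlim : Tendsto q atTop (𝓝 qs) := by
    rw [← tendsto_sub_nhds_zero_iff]
    exact tendsto_zero_iff_norm_tendsto_zero.2 hq0
  have hblim : Tendsto b atTop (𝓝 qs) := by
    have h2 := hEv.add hqlim
    have e : ∀ n, (b n - q n) + q n = b n := fun n => by abel
    have h3 := h2.congr e
    simpa using h3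
  -- cc converges to d
  have hcclim : Tendsto ccf atTop (𝓝 (B φs - qs)) := by
    have h1 : Tendsto (fun n => p n - b n) atTop (𝓝 (B φs - qs)) := hplim.sub hblim
    have h2 : Tendsto (fun n => B (φ (n-1)) - p (n-1)) atTop (𝓝 0) :=
      hΔv.comp (tendsto_sub_atTop_nat 1)
    have h3 : Tendsto (fun n => b (n-1) - q (n-1)) atTop (𝓝 0) :=
      hEv.comp (tendsto_sub_atTop_nat 1)
    have h5 := (h1.add (h2.add h3)).sub (hδv.const_smul (2*s))
    simp only [hccf]
    simpa using h5
    -- boundedness of μ and auxiliary decompositions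
  have hμb : ∀ᶠ n in atTop, ‖μ n‖ ≤ Rμ + ‖μs‖ := by
    filter_upwards [eventually_ge_atTop 2] with n hn
    have h1 := hμsb n hn
    have e : μ n = (μ n - μs) + μs := by abel
    rw [e]
    exact le_trans (norm_add_le _ _) (by linarith)
  have hdecG : ∀ n, 1 ≤ n → ∀ y : H,
      ⟪ν n + r • (B (φ n) - p n), y⟫ = ⟪μ n, y⟫ + ⟪(s⁻¹+r) • (B (φ n) - p n), y⟫ := by
    intro n hn y
    rw [(hii n hn).1]
    rw [show s⁻¹ • (B (φ n) - p n) + μ n + r • (B (φ n) - p n)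
        = μ n + (s⁻¹+r) • (B (φ n) - p n) from by module]
    rw [inner_add_left]
  have hdecF : ∀ n, 1 ≤ n → ∀ y : H,
      ⟪η n + r • (b n - q n), y⟫ = ⟪μ n, y⟫ + ⟪(s⁻¹+r) • (b n - q n), y⟫ := by
    intro n hn y
    rw [(hii n hn).2]
    rw [show s⁻¹ • (b n - q n) + μ n + r • (b n - q n)
        = μ n + (s⁻¹+r) • (b n - q n) from by module]
    rw [inner_add_left]
  -- convergence of the values G(φⁿ), F(qⁿ)
  have hBφd : Tendsto (fun n => B φs - B (φ n)) atTop (𝓝 0) := by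
    have h := (tendsto_const_nhds (x := B φs)).sub hBφlim
    simpa using h
  have hqd : Tendsto (fun n => qs - q n) atTop (𝓝 0) := by
    have h := (tendsto_const_nhds (x := qs)).sub hqlim
    simpa using h
  have hGval : Tendsto (fun n => G (φ n)) atTop (𝓝 (G φs)) := by
    have hlo : ∀ n, -⟪μs, B (φ n) - B φs⟫ ≤ G (φ n) - G φs := by
      intro n; have := hGs (φ n); linarith
    have hup : ∀ᶠ n in atTop, G (φ n) - G φs
        ≤ ⟪μ n, B φs - B (φ n)⟫ + ⟪(s⁻¹+r) • (B (φ n) - p n), B φs - B (φ n)⟫ := by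
      filter_upwards [eventually_ge_atTop 1] with n hn
      have h1 := hiii n hn φs
      have h2 := hdecG n hn (B φs - B (φ n))
      linarith
    have hlolim : Tendsto (fun n => -⟪μs, B (φ n) - B φs⟫) atTop (𝓝 0) := by
      have h1 : Tendsto (fun n => B (φ n) - B φs) atTop (𝓝 0) := by
        have h := hBφlim.sub (tendsto_const_nhds (x := B φs))
        simpa using h
      have hc : Tendsto (fun _ : ℕ => μs) atTop (𝓝 μs) := tendsto_const_nhds
      have h2 : Tendsto (fun n => (⟪μs, B (φ n) - B φs⟫ : ℝ)) atTop (𝓝 ⟪μs, (0:H)⟫) :=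
        hc.inner h1
      simpa using h2.neg
    have huplim : Tendsto (fun n => ⟪μ n, B φs - B (φ n)⟫
        + ⟪(s⁻¹+r) • (B (φ n) - p n), B φs - B (φ n)⟫) atTop (𝓝 0) := by
      have t2 : Tendsto (fun n => ⟪μ n, B φs - B (φ n)⟫) atTop (𝓝 0) :=
        (aux_inner_zero _ μ _ hBφd hμb).congr (fun n => real_inner_comm _ _)
      have t3 : Tendsto (fun n => ⟪(s⁻¹+r) • (B (φ n) - p n), B φs - B (φ n)⟫) atTop (𝓝 0) := by
        refine aux_inner_zero _ _ 1 (by simpa using hΔv.const_smul (s⁻¹+r)) ?_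
        have hxn : Tendsto (fun n => ‖B φs - B (φ n)‖) atTop (𝓝 0) := by
          simpa using hBφd.norm
        filter_upwards [hxn.eventually (eventually_le_nhds one_pos)] with n h
        simpa using h
      simpa using t2.add t3
    have hmid : Tendsto (fun n => G (φ n) - G φs) atTop (𝓝 0) :=
      tendsto_of_tendsto_of_tendsto_of_le_of_le' hlolim huplim
        (Eventually.of_forall hlo) hup
    have := hmid.add_const (G φs)
    simpa using this
  have hFval : Tendsto (fun n => F (q n)) atTop (𝓝 (F qs)) := by
    have hlo : ∀ n, ⟪μs, q n - qs⟫ ≤ F (q n) - F qs := by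
      intro n; have := hFs (q n); linarith
    have hup : ∀ᶠ n in atTop, F (q n) - F qs
        ≤ ⟪μ n, q n - qs⟫ + ⟪(s⁻¹+r) • (b n - q n), q n - qs⟫ := by
      filter_upwards [eventually_ge_atTop 1] with n hn
      have h1 := hiv n hn qs
      have h2 := hdecF n hn (q n - qs)
      linarith
    have hqd2 : Tendsto (fun n => q n - qs) atTop (𝓝 0) := by
      have h := hqlim.sub (tendsto_const_nhds (x := qs))
      simpa using h
    have hlolim : Tendsto (fun n => ⟪μs, q n - qs⟫) atTop (𝓝 0) := by
      have hc : Tendsto (fun _ : ℕ => μs) atTop (𝓝 μs) := tendsto_const_nhds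
      have h2 : Tendsto (fun n => (⟪μs, q n - qs⟫ : ℝ)) atTop (𝓝 ⟪μs, (0:H)⟫) :=
        hc.inner hqd2
      simpa using h2
    have huplim : Tendsto (fun n => ⟪μ n, q n - qs⟫
        + ⟪(s⁻¹+r) • (b n - q n), q n - qs⟫) atTop (𝓝 0) := by
      have t2 : Tendsto (fun n => ⟪μ n, q n - qs⟫) atTop (𝓝 0) :=
        (aux_inner_zero _ μ _ hqd2 hμb).congr (fun n => real_inner_comm _ _)
      have t3 : Tendsto (fun n => ⟪(s⁻¹+r) • (b n - q n), q n - qs⟫) atTop (𝓝 0) := by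
        refine aux_inner_zero _ _ 1 (by simpa using hEv.const_smul (s⁻¹+r)) ?_
        have hxn : Tendsto (fun n => ‖q n - qs‖) atTop (𝓝 0) := by
          simpa using hqd2.norm
        filter_upwards [hxn.eventually (eventually_le_nhds one_pos)] with n h
        simpa using h
      simpa using t2.add t3
    have hmid : Tendsto (fun n => F (q n) - F qs) atTop (𝓝 0) :=
      tendsto_of_tendsto_of_tendsto_of_le_of_le' hlolim huplim
        (Eventually.of_forall hlo) hup
    have := hmid.add_const (F qs)
    simpa using this
  -- boundedness of I(μⁿ)
  have hccd : Tendsto (fun n => ccf n - (B φs - qs)) atTop (𝓝 0) := by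
    have h := hcclim.sub (tendsto_const_nhds (x := B φs - qs))
    simpa using h
  have hccev : ∀ᶠ n in atTop, ‖ccf n‖ ≤ ‖B φs - qs‖ + 1 := by
    have hxn : Tendsto (fun n => ‖ccf n - (B φs - qs)‖) atTop (𝓝 0) := by
      simpa using hccd.norm
    filter_upwards [hxn.eventually (eventually_le_nhds one_pos)] with n h
    have e : ccf n = (ccf n - (B φs - qs)) + (B φs - qs) := by abel
    rw [e]
    exact le_trans (norm_add_le _ _) (by linarith)
  set RI : ℝ := |I μs| + (‖B φs - qs‖ + 1)*Rμ + ‖B φs - qs‖*Rμ with hRIdef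
  have hIb : ∀ᶠ n in atTop, |I (μ n)| ≤ RI := by
    filter_upwards [hccev, eventually_ge_atTop 2] with n h1 hn2
    have h2 := hμsb n hn2
    have hlo := hIs (μ n)
    have h3 := hsubI n hn2 μs
    have ha1 := abs_real_inner_le_norm (B φs - qs) (μ n - μs)
    have ha2 := abs_real_inner_le_norm (ccf n) (μs - μ n)
    have hb1 : ‖B φs - qs‖*‖μ n - μs‖ ≤ ‖B φs - qs‖*Rμ :=
      mul_le_mul_of_nonneg_left h2 (norm_nonneg _)
    have hb2 : ‖ccf n‖*‖μs - μ n‖ ≤ (‖B φs - qs‖ + 1)*Rμ := by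
      rw [norm_sub_rev μs (μ n)]
      exact mul_le_mul h1 h2 (norm_nonneg _) (by positivity)
    rw [hRIdef, abs_le]
    constructor
    · have : I (μ n) ≥ I μs - ‖B φs - qs‖*Rμ := by
        have := abs_le.1 ha1
        linarith
      have hRμnn : 0 ≤ (‖B φs - qs‖ + 1)*Rμ := by positivity
      have := neg_abs_le (I μs)
      linarith
    · have : I (μ n) ≤ I μs + (‖B φs - qs‖ + 1)*Rμ := by
        have := abs_le.1 ha2
        linarith
      have hRμnn : 0 ≤ ‖B φs - qs‖*Rμ := by positivity
      have := le_abs_self (I μs)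
      linarith
    -- per-ultrafilter weak limits and their saddle property
  have hμbnn : (0:ℝ) ≤ Rμ + ‖μs‖ := add_nonneg hRμ0 (norm_nonneg _)
  have hmain : ∀ U : Ultrafilter ℕ, (U : Filter ℕ) ≤ atTop → ∃ z : H,
      ((∀ φ', G φ' - G φs + ⟪z, B φ' - B φs⟫ ≥ 0) ∧
       (∀ q', F q' - F qs - ⟪z, q' - qs⟫ ≥ 0) ∧
       (∀ μ', I μ' - I z - ⟪B φs - qs, μ' - z⟫ ≥ 0)) ∧
      (∀ v : H, Tendsto (fun n => ⟪μ n, v⟫) (U : Filter ℕ) (𝓝 ⟪z, v⟫)) := by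
    intro U hU
    haveI : (U : Filter ℕ).NeBot := U.neBot
    obtain ⟨z, hzb, hz⟩ := aux_weak_limit μ (Rμ + ‖μs‖) hμbnn hμb U hU
    refine ⟨z, ⟨?_, ?_, ?_⟩, hz⟩
    · -- G saddle inequality for z
      intro φ'
      have t2 : Tendsto (fun n => ⟪μ n, B φs - B (φ n)⟫) atTop (𝓝 0) :=
        (aux_inner_zero _ μ _ hBφd hμb).congr (fun n => real_inner_comm _ _)
      have t3 : Tendsto (fun n => ⟪(s⁻¹+r) • (B (φ n) - p n), B φ' - B (φ n)⟫) atTop (𝓝 0) := by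
        refine aux_inner_zero _ _ (‖B φ' - B φs‖ + 1) (by simpa using hΔv.const_smul (s⁻¹+r)) ?_
        have hxn : Tendsto (fun n => ‖B φs - B (φ n)‖) atTop (𝓝 0) := by
          simpa using hBφd.norm
        filter_upwards [hxn.eventually (eventually_le_nhds one_pos)] with n h
        have e : B φ' - B (φ n) = (B φ' - B φs) + (B φs - B (φ n)) := by abel
        rw [e]
        exact le_trans (norm_add_le _ _) (by linarith)
      have hflim : Tendsto (fun n => G (φ n) - (⟪μ n, B φ' - B φs⟫
          + ⟪μ n, B φs - B (φ n)⟫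
          + ⟪(s⁻¹+r) • (B (φ n) - p n), B φ' - B (φ n)⟫)) (U : Filter ℕ)
          (𝓝 (G φs - (⟪z, B φ' - B φs⟫ + 0 + 0))) :=
        (hGval.mono_left hU).sub (((hz _).add (t2.mono_left hU)).add (t3.mono_left hU))
      have hle : ∀ᶠ n in (U : Filter ℕ), G (φ n) - (⟪μ n, B φ' - B φs⟫
          + ⟪μ n, B φs - B (φ n)⟫
          + ⟪(s⁻¹+r) • (B (φ n) - p n), B φ' - B (φ n)⟫) ≤ G φ' := by
        filter_upwards [hU (eventually_ge_atTop 1)] with n hn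
        have h1 := hiii n hn φ'
        have h2 := hdecG n hn (B φ' - B (φ n))
        have e2 : (⟪μ n, B φ' - B (φ n)⟫ : ℝ)
            = ⟪μ n, B φ' - B φs⟫ + ⟪μ n, B φs - B (φ n)⟫ := by
          rw [← inner_add_right]; congr 1; abel
        linarith
      have hfin := le_of_tendsto hflim hle
      simp only [add_zero] at hfin
      linarith
    · -- F saddle inequality for z
      intro q'
      have hqd2 : Tendsto (fun n => qs - q n) atTop (𝓝 0) := hqd
      have t2 : Tendsto (fun n => ⟪μ n, qs - q n⟫) atTop (𝓝 0) :=
        (aux_inner_zero _ μ _ hqd2 hμb).congr (fun n => real_inner_comm _ _)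
      have t3 : Tendsto (fun n => ⟪(s⁻¹+r) • (b n - q n), q' - q n⟫) atTop (𝓝 0) := by
        refine aux_inner_zero _ _ (‖q' - qs‖ + 1) (by simpa using hEv.const_smul (s⁻¹+r)) ?_
        have hxn : Tendsto (fun n => ‖qs - q n‖) atTop (𝓝 0) := by
          simpa using hqd2.norm
        filter_upwards [hxn.eventually (eventually_le_nhds one_pos)] with n h
        have e : q' - q n = (q' - qs) + (qs - q n) := by abel
        rw [e]
        exact le_trans (norm_add_le _ _) (by linarith)
      have hflim : Tendsto (fun n => F (q n) + (⟪μ n, q' - qs⟫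
          + ⟪μ n, qs - q n⟫
          + ⟪(s⁻¹+r) • (b n - q n), q' - q n⟫)) (U : Filter ℕ)
          (𝓝 (F qs + (⟪z, q' - qs⟫ + 0 + 0))) :=
        (hFval.mono_left hU).add (((hz _).add (t2.mono_left hU)).add (t3.mono_left hU))
      have hle : ∀ᶠ n in (U : Filter ℕ), F (q n) + (⟪μ n, q' - qs⟫
          + ⟪μ n, qs - q n⟫
          + ⟪(s⁻¹+r) • (b n - q n), q' - q n⟫) ≤ F q' := by
        filter_upwards [hU (eventually_ge_atTop 1)] with n hn
        have h1 := hiv n hn q'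
        have h2 := hdecF n hn (q' - q n)
        have e2 : (⟪μ n, q' - q n⟫ : ℝ) = ⟪μ n, q' - qs⟫ + ⟪μ n, qs - q n⟫ := by
          rw [← inner_add_right]; congr 1; abel
        have e3 : (⟪η n + r • (b n - q n), q n - q'⟫ : ℝ)
            = -⟪η n + r • (b n - q n), q' - q n⟫ := by
          rw [← inner_neg_right]; congr 1; abel
        linarith
      have hfin := le_of_tendsto hflim hle
      simp only [add_zero] at hfin
      linarith
    · -- I saddle inequality for z
      obtain ⟨ℓI, hℓIb, hℓIt⟩ := aux_ultra_lim (fun n => I (μ n)) RI hIb U hU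
      have hup : ∀ μ' : H, ℓI + (⟪B φs - qs, μ'⟫ - ⟪z, B φs - qs⟫) ≤ I μ' := by
        intro μ'
        have t4 : Tendsto (fun n => ⟪ccf n - (B φs - qs), μ' - μ n⟫) atTop (𝓝 0) := by
          refine aux_inner_zero _ _ (‖μ'‖ + (Rμ + ‖μs‖)) hccd ?_
          filter_upwards [hμb] with n h
          have : ‖μ' - μ n‖ ≤ ‖μ'‖ + ‖μ n‖ := norm_sub_le _ _
          linarith
        have hflim : Tendsto (fun n => I (μ n) + (⟪ccf n - (B φs - qs), μ' - μ n⟫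
            + (⟪B φs - qs, μ'⟫ - ⟪μ n, B φs - qs⟫))) (U : Filter ℕ)
            (𝓝 (ℓI + (0 + (⟪B φs - qs, μ'⟫ - ⟪z, B φs - qs⟫)))) :=
          hℓIt.add ((t4.mono_left hU).add (tendsto_const_nhds.sub (hz _)))
        have hle : ∀ᶠ n in (U : Filter ℕ), I (μ n) + (⟪ccf n - (B φs - qs), μ' - μ n⟫
            + (⟪B φs - qs, μ'⟫ - ⟪μ n, B φs - qs⟫)) ≤ I μ' := by
          filter_upwards [hU (eventually_ge_atTop 2)] with n hn
          have h1 := hsubI n hn μ'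
          have e2 : (⟪ccf n, μ' - μ n⟫ : ℝ) = ⟪ccf n - (B φs - qs), μ' - μ n⟫
              + (⟪B φs - qs, μ'⟫ - ⟪B φs - qs, μ n⟫) := by
            simp only [inner_sub_left, inner_sub_right]
            ring
          have e3 : (⟪B φs - qs, μ n⟫ : ℝ) = ⟪μ n, B φs - qs⟫ := real_inner_comm _ _
          linarith
        have hfin := le_of_tendsto hflim hle
        linarith
      have hlow : I z ≤ ℓI := by
        refine le_of_forall_pos_le_add ?_
        intro ε hε
        set Cs : Set H := {x : H | I x ≤ ℓI + ε} with hCsdef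
        have hCcl : IsClosed Cs := hIlsc.isClosed_preimage (ℓI + ε)
        have hCcv : Convex ℝ Cs := by
          have h := hIconv.convex_le (ℓI + ε)
          simpa [hCsdef, Set.sep_univ] using h
        have hmemev : ∀ᶠ n in (U : Filter ℕ), μ n ∈ Cs :=
          hℓIt.eventually (eventually_le_nhds (by linarith : ℓI < ℓI + ε))
        haveI : (U : Filter ℕ).NeBot := U.neBot
        have hCne : Cs.Nonempty := by
          obtain ⟨n, hn⟩ := hmemev.exists
          exact ⟨μ n, hn⟩
        exact aux_mem_closed_convex Cs hCne hCcl hCcv μ U hmemev z hz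
      intro μ'
      have h1 := hup μ'
      have e : (⟪B φs - qs, μ' - z⟫ : ℝ) = ⟪B φs - qs, μ'⟫ - ⟪B φs - qs, z⟫ :=
        inner_sub_right _ _ _
      have ecomm : (⟪z, B φs - qs⟫ : ℝ) = ⟪B φs - qs, z⟫ := real_inner_comm _ _
      linarith
  -- convergence of ‖μⁿ - z‖² for every saddle multiplier z
  have hnormconv : ∀ z : H,
      (∀ φ', G φ' - G φs + ⟪z, B φ' - B φs⟫ ≥ 0) →
      (∀ q', F q' - F qs - ⟪z, q' - qs⟫ ≥ 0) →
      (∀ μ', I μ' - I z - ⟪B φs - qs, μ' - z⟫ ≥ 0) →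
      ∃ l : ℝ, Tendsto (fun n => ‖μ n - z‖^2) atTop (𝓝 l) := by
    intro z hz1 hz2 hz3
    have hwzpos : ∀ n, 2 ≤ n → 0 ≤ 2*ρ*s*(1-θ)*‖μ n - μ (n-1)‖^2
        + (2*ρ*(r+1/s) - ρ^2*(r+1/s)^2 - c1)*(‖B (φ n) - p n‖^2 + ‖b n - q n‖^2)
        + 2*ρ*(AAf z n + CCf z n + DDf z n) := by
      intro n hn
      have g1 : 0 ≤ 2*ρ*s*(1-θ)*‖μ n - μ (n-1)‖^2 := mul_nonneg hcoef.le (sq_nonneg _)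
      have g2 : 0 ≤ (2*ρ*(r+1/s) - ρ^2*(r+1/s)^2 - c1)*(‖B (φ n) - p n‖^2 + ‖b n - q n‖^2) :=
        mul_nonneg hβ.le (by positivity)
      have g3 := hAApos z hz1 n (by omega)
      have g4 := hCCpos z hz2 n (by omega)
      have g5 := hDDpos z hz3 n hn
      linarith [mul_nonneg h2ρ.le g3, mul_nonneg h2ρ.le g4, mul_nonneg h2ρ.le g5]
    obtain ⟨⟨Lz, hLz⟩, -, -⟩ := aux_seq_machine (Yf z) (fun n => 2*ρ*s*(1-θ)*‖μ n - μ (n-1)‖^2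
        + (2*ρ*(r+1/s) - ρ^2*(r+1/s)^2 - c1)*(‖B (φ n) - p n‖^2 + ‖b n - q n‖^2)
        + 2*ρ*(AAf z n + CCf z n + DDf z n))
      (fun n hn => by have := hkey z n hn; linarith)
      (hY0 z) hwzpos
    have hXz : Tendsto (fun n => ⟪μ n - z, (B (φ n) - p n) + (b n - q n)⟫) atTop (𝓝 0) := by
      have hx : Tendsto (fun n => (B (φ n) - p n) + (b n - q n)) atTop (𝓝 0) := by
        simpa using hΔv.add hEv
      refine (aux_inner_zero _ (fun n => μ n - z) ((Rμ + ‖μs‖) + ‖z‖) hx ?_).congr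
        (fun n => real_inner_comm _ _)
      filter_upwards [hμb] with n h
      have : ‖μ n - z‖ ≤ ‖μ n‖ + ‖z‖ := norm_sub_le _ _
      linarith
    have hppb : Tendsto (fun n => ‖p (n+1) - B φs‖^2) atTop (𝓝 0) :=
      aux_normsq_zero (fun n => p (n+1)) (B φs) (hplim.comp (tendsto_add_atTop_nat 1))
    have hbpb : Tendsto (fun n => ‖b (n+1) - qs‖^2) atTop (𝓝 0) :=
      aux_normsq_zero (fun n => b (n+1)) qs (hblim.comp (tendsto_add_atTop_nat 1))
    have hcomb : Tendsto (fun n => (Yf z n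
        - 2*ρ*⟪μ n - z, (B (φ n) - p n) + (b n - q n)⟫
        - ‖p (n+1) - B φs‖^2 - ‖b (n+1) - qs‖^2
        - c1*(‖B (φ n) - p n‖^2 + ‖b n - q n‖^2)) / (2*ρ*s)) atTop
        (𝓝 ((Lz - 2*ρ*0 - 0 - 0 - c1*0) / (2*ρ*s))) := by
      exact Tendsto.div_const ((((hLz.sub (hXz.const_mul (2*ρ))).sub hppb).sub hbpb).sub
        (hΔE2.const_mul c1)) _
    refine ⟨_, hcomb.congr (fun n => ?_)⟩
    simp only [hYf]
    rw [div_eq_iff (by positivity : (2*ρ*s) ≠ 0)]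
    ring
    -- uniqueness of weak ultrafilter limits (Opial-type argument)
  have huniq : ∀ (U1 U2 : Ultrafilter ℕ), (U1 : Filter ℕ) ≤ atTop → (U2 : Filter ℕ) ≤ atTop →
      ∀ z1 z2 : H,
      ((∀ φ', G φ' - G φs + ⟪z1, B φ' - B φs⟫ ≥ 0) ∧
       (∀ q', F q' - F qs - ⟪z1, q' - qs⟫ ≥ 0) ∧
       (∀ μ', I μ' - I z1 - ⟪B φs - qs, μ' - z1⟫ ≥ 0)) →
      (∀ v : H, Tendsto (fun n => ⟪μ n, v⟫) (U1 : Filter ℕ) (𝓝 ⟪z1, v⟫)) →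
      ((∀ φ', G φ' - G φs + ⟪z2, B φ' - B φs⟫ ≥ 0) ∧
       (∀ q', F q' - F qs - ⟪z2, q' - qs⟫ ≥ 0) ∧
       (∀ μ', I μ' - I z2 - ⟪B φs - qs, μ' - z2⟫ ≥ 0)) →
      (∀ v : H, Tendsto (fun n => ⟪μ n, v⟫) (U2 : Filter ℕ) (𝓝 ⟪z2, v⟫)) → z1 = z2 := by
    intro U1 U2 hU1 hU2 z1 z2 hp1 ht1 hp2 ht2
    obtain ⟨l1, hl1⟩ := hnormconv z1 hp1.1 hp1.2.1 hp1.2.2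
    obtain ⟨l2, hl2⟩ := hnormconv z2 hp2.1 hp2.2.1 hp2.2.2
    have e : ∀ n, (-(1:ℝ)/2) * ((‖μ n - z1‖^2 - ‖μ n - z2‖^2) - (‖z1‖^2 - ‖z2‖^2))
        = ⟪μ n, z1 - z2⟫ := by
      intro n
      rw [norm_sub_sq_real, norm_sub_sq_real, inner_sub_right]
      ring
    have hinner : Tendsto (fun n => (⟪μ n, z1 - z2⟫ : ℝ)) atTop
        (𝓝 ((-(1:ℝ)/2) * ((l1 - l2) - (‖z1‖^2 - ‖z2‖^2)))) := by
      have h := (((hl1.sub hl2).sub_const (‖z1‖^2 - ‖z2‖^2)).const_mul (-(1:ℝ)/2))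
      exact h.congr e
    haveI : (U1 : Filter ℕ).NeBot := U1.neBot
    haveI : (U2 : Filter ℕ).NeBot := U2.neBot
    have c1' := tendsto_nhds_unique (hinner.mono_left hU1) (ht1 (z1 - z2))
    have c2' := tendsto_nhds_unique (hinner.mono_left hU2) (ht2 (z1 - z2))
    have hz0 : (⟪z1 - z2, z1 - z2⟫ : ℝ) = 0 := by
      rw [inner_sub_left]; linarith
    have h0 := inner_self_eq_zero.1 hz0
    exact sub_eq_zero.1 h0
  -- assembly
  haveI hNB : (atTop : Filter ℕ).NeBot := atTop_neBot
  obtain ⟨μhat, hμhatprops, hμhattend⟩ := hmain (Ultrafilter.of atTop) (Ultrafilter.of_le _)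
  have hμweak : ∀ v : H, Tendsto (fun n => ⟪μ n, v⟫) atTop (𝓝 ⟪μhat, v⟫) := by
    intro v
    rw [tendsto_iff_ultrafilter]
    intro U hU
    obtain ⟨z, hzprops, hztend⟩ := hmain U hU
    have hz : z = μhat := huniq U (Ultrafilter.of atTop) hU (Ultrafilter.of_le _) z μhat
      hzprops hztend hμhatprops hμhattend
    rw [← hz]
    exact hztend v
  constructor
  · refine ⟨μhat, hμweak, ?_, ?_, ?_⟩
    · intro v
      have hx : Tendsto (fun n => s⁻¹ • (B (φ n) - p n)) atTop (𝓝 0) := by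
        simpa using hΔv.const_smul s⁻¹
      have h0 : Tendsto (fun n => (⟪s⁻¹ • (B (φ n) - p n), v⟫ : ℝ)) atTop (𝓝 ⟪(0:H), v⟫) :=
        hx.inner tendsto_const_nhds
      have h1 : Tendsto (fun n => ⟪μ n, v⟫ + ⟪s⁻¹ • (B (φ n) - p n), v⟫) atTop
          (𝓝 (⟪μhat, v⟫ + ⟪(0:H), v⟫)) := (hμweak v).add h0
      have h2 : Tendsto (fun n => ⟪μ n, v⟫ + ⟪s⁻¹ • (B (φ n) - p n), v⟫) atTop
          (𝓝 ⟪μhat, v⟫) := by simpa using h1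
      refine Tendsto.congr' ?_ h2
      filter_upwards [eventually_ge_atTop 1] with n hn
      rw [(hii n hn).1, inner_add_left]
      ring
    · intro v
      have hx : Tendsto (fun n => s⁻¹ • (b n - q n)) atTop (𝓝 0) := by
        simpa using hEv.const_smul s⁻¹
      have h0 : Tendsto (fun n => (⟪s⁻¹ • (b n - q n), v⟫ : ℝ)) atTop (𝓝 ⟪(0:H), v⟫) :=
        hx.inner tendsto_const_nhds
      have h1 : Tendsto (fun n => ⟪μ n, v⟫ + ⟪s⁻¹ • (b n - q n), v⟫) atTop
          (𝓝 (⟪μhat, v⟫ + ⟪(0:H), v⟫)) := (hμweak v).add h0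
      have h2 : Tendsto (fun n => ⟪μ n, v⟫ + ⟪s⁻¹ • (b n - q n), v⟫) atTop
          (𝓝 ⟪μhat, v⟫) := by simpa using h1
      refine Tendsto.congr' ?_ h2
      filter_upwards [eventually_ge_atTop 1] with n hn
      rw [(hii n hn).2, inner_add_left]
      ring
    · intro φ' q' μ'
      obtain ⟨hp1, hp2, hp3⟩ := hμhatprops
      constructor
      · simp only [hL]
        have h := hp3 μ'
        have e : (⟪B φs - qs, μ' - μhat⟫ : ℝ) = ⟪μ', B φs - qs⟫ - ⟪μhat, B φs - qs⟫ := by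
          rw [inner_sub_right, real_inner_comm (B φs - qs) μ', real_inner_comm (B φs - qs) μhat]
        linarith
      · simp only [hL]
        have h1 := hp1 φ'
        have h2 := hp2 q'
        have e : (⟪μhat, B φ' - q'⟫ : ℝ) - ⟪μhat, B φs - qs⟫
            = ⟪μhat, B φ' - B φs⟫ - ⟪μhat, q' - qs⟫ := by
          rw [← inner_sub_right, ← inner_sub_right]
          congr 1
          abel
        linarith
  · intro hIuc
    obtain ⟨ΨI, hΨImono, hΨI0, hΨInn, hΨIkey⟩ :=
      hIuc (Metric.closedBall μs Rμ) Metric.isBounded_closedBall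
    have hμmem : ∀ n, 2 ≤ n → μ n ∈ Metric.closedBall μs Rμ := by
      intro n hn
      rw [Metric.mem_closedBall, dist_eq_norm]
      exact hμsb n hn
    have hμsmem : μs ∈ Metric.closedBall μs Rμ := Metric.mem_closedBall_self hRμ0
    have hDDI : ∀ n, 2 ≤ n → ΨI ‖μ n - μs‖ ≤ DDf μs n := by
      intro n hn
      have h := hΨIkey (μ n) (hμmem n hn) μs hμsmem (ccf n) (B φs - qs) (hsubI n hn) hsubIs
      simp only [hDDf]
      linarith
    have hμ0 : Tendsto (fun n => ‖μ n - μs‖) atTop (𝓝 0) := by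
      refine aux_psi_tendsto ΨI hΨImono hΨI0 _ (fun n => DDf μs n) ?_ ?_ hDD0
      · filter_upwards with n; exact norm_nonneg _
      · filter_upwards [eventually_ge_atTop 2] with n hn; exact hDDI n hn
    have hμlim : Tendsto μ atTop (𝓝 μs) := by
      rw [← tendsto_sub_nhds_zero_iff]
      exact tendsto_zero_iff_norm_tendsto_zero.2 hμ0
    have hνlim : Tendsto ν atTop (𝓝 μs) := by
      have hx : Tendsto (fun n => s⁻¹ • (B (φ n) - p n)) atTop (𝓝 0) := by
        simpa using hΔv.const_smul s⁻¹
      have h1 : Tendsto (fun n => s⁻¹ • (B (φ n) - p n) + μ n) atTop (𝓝 (0 + μs)) :=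
        hx.add hμlim
      have h2 : Tendsto (fun n => s⁻¹ • (B (φ n) - p n) + μ n) atTop (𝓝 μs) := by
        simpa using h1
      refine Tendsto.congr' ?_ h2
      filter_upwards [eventually_ge_atTop 1] with n hn
      exact ((hii n hn).1).symm
    have hηlim : Tendsto η atTop (𝓝 μs) := by
      have hx : Tendsto (fun n => s⁻¹ • (b n - q n)) atTop (𝓝 0) := by
        simpa using hEv.const_smul s⁻¹
      have h1 : Tendsto (fun n => s⁻¹ • (b n - q n) + μ n) atTop (𝓝 (0 + μs)) :=
        hx.add hμlim
      have h2 : Tendsto (fun n => s⁻¹ • (b n - q n) + μ n) atTop (𝓝 μs) := by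
        simpa using h1
      refine Tendsto.congr' ?_ h2
      filter_upwards [eventually_ge_atTop 1] with n hn
      exact ((hii n hn).2).symm
    exact ⟨hμlim, hνlim, hηlim⟩
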